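/- Let b⁽¹⁾, b⁽²⁾, b⁽³⁾, b⁽⁴⁾ ∈ ℤ² lie in the open quadrants (+,+), (−,+), (−,−), (+,−) respectively, and let η₁ = b₁₁ + b₁₂ − 1, η₂ = b₂₂ − 1, η₄ = b₄₁ − 1 (where b⁽ⁱ⁾ = (bᵢ₁, bᵢ₂)). Then the only integer point z ∈ ℤ² satisfying ⟨b⁽¹⁾,z⟩ ≤ η₁, ⟨b⁽²⁾,z⟩ ≤ η₂, ⟨b⁽⁴⁾,z⟩ ≤ η₄, and ⟨b⁽³⁾,z⟩ ≤ 0 is z = 0. Moreover, each of the three points (1,0), (0,1), (1,1) satisfies all but one of these four inequalities (a different one each). -/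
import Mathlib


/-- with `b⁽¹⁾,…,b⁽⁴⁾` in the open quadrants (+,+), (−,+), (−,−), (+,−)
and `η₁ = b₁₁+b₁₂−1`, `η₂ = b₂₂−1`, `η₄ = b₄₁−1`, the only `z ∈ ℤ²` with
`⟨b⁽¹⁾,z⟩ ≤ η₁`, `⟨b⁽²⁾,z⟩ ≤ η₂`, `⟨b⁽⁴⁾,z⟩ ≤ η₄`, `⟨b⁽³⁾,z⟩ ≤ 0` is `z = 0`;
moreover `(1,1)` violates only the first inequality, `(0,1)` only the second, and
`(1,0)` only the fourth, satisfying the remaining three in each case. -/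
theorem stmt11 (b1 b2 b3 b4 : ℤ × ℤ)
    (h1 : 0 < b1.1 ∧ 0 < b1.2) (h2 : b2.1 < 0 ∧ 0 < b2.2)
    (h3 : b3.1 < 0 ∧ b3.2 < 0) (h4 : 0 < b4.1 ∧ b4.2 < 0) :
    (∀ z : ℤ × ℤ,
      b1.1 * z.1 + b1.2 * z.2 ≤ b1.1 + b1.2 - 1 →
      b2.1 * z.1 + b2.2 * z.2 ≤ b2.2 - 1 →
      b4.1 * z.1 + b4.2 * z.2 ≤ b4.1 - 1 →
      b3.1 * z.1 + b3.2 * z.2 ≤ 0 → z = 0) ∧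
    -- z = (1,1): violates the first inequality only
    (¬ b1.1 * 1 + b1.2 * 1 ≤ b1.1 + b1.2 - 1) ∧
    (b2.1 * 1 + b2.2 * 1 ≤ b2.2 - 1) ∧
    (b4.1 * 1 + b4.2 * 1 ≤ b4.1 - 1) ∧
    (b3.1 * 1 + b3.2 * 1 ≤ 0) ∧
    -- z = (0,1): violates the second inequality only
    (b1.1 * 0 + b1.2 * 1 ≤ b1.1 + b1.2 - 1) ∧
    (¬ b2.1 * 0 + b2.2 * 1 ≤ b2.2 - 1) ∧
    (b4.1 * 0 + b4.2 * 1 ≤ b4.1 - 1) ∧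
    (b3.1 * 0 + b3.2 * 1 ≤ 0) ∧
    -- z = (1,0): violates the fourth inequality only
    (b1.1 * 1 + b1.2 * 0 ≤ b1.1 + b1.2 - 1) ∧
    (b2.1 * 1 + b2.2 * 0 ≤ b2.2 - 1) ∧
    (¬ b4.1 * 1 + b4.2 * 0 ≤ b4.1 - 1) ∧
    (b3.1 * 1 + b3.2 * 0 ≤ 0) := by
  obtain ⟨a1, a2⟩ := h1
  obtain ⟨c1, c2⟩ := h2
  obtain ⟨d1, d2⟩ := h3
  obtain ⟨e1, e2⟩ := h4
  refine ⟨?_, by nlinarith, by nlinarith, by nlinarith, by nlinarith,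
    by nlinarith, by nlinarith, by nlinarith, by nlinarith,
    by nlinarith, by nlinarith, by nlinarith, by nlinarith⟩
  rintro ⟨z1, z2⟩ p1 p2 p4 p3
  simp only [Prod.ext_iff, Prod.fst_zero, Prod.snd_zero]
  rcases le_or_gt z1 0 with hx | hx <;> rcases le_or_gt z2 0 with hy | hy
  · constructor
    · by_contra h
      have hz : z1 ≤ -1 := by omega
      nlinarith [mul_nonneg (by linarith : (0:ℤ) ≤ -b3.2) (by linarith : (0:ℤ) ≤ -z2),
        mul_le_mul_of_nonneg_left hz (by linarith : (0:ℤ) ≤ -b3.1)]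
    · by_contra h
      have hz : z2 ≤ -1 := by omega
      nlinarith [mul_nonneg (by linarith : (0:ℤ) ≤ -b3.1) (by linarith : (0:ℤ) ≤ -z1),
        mul_le_mul_of_nonneg_left hz (by linarith : (0:ℤ) ≤ -b3.2)]
  · exfalso
    have hz : 1 ≤ z2 := hy
    nlinarith [mul_nonneg (by linarith : (0:ℤ) ≤ -b2.1) (by linarith : (0:ℤ) ≤ -z1),
      mul_le_mul_of_nonneg_left hz (by linarith : (0:ℤ) ≤ b2.2)]
  · exfalso
    have hz : 1 ≤ z1 := hx
    nlinarith [mul_nonneg (by linarith : (0:ℤ) ≤ -b4.2) (by linarith : (0:ℤ) ≤ -z2),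
      mul_le_mul_of_nonneg_left hz (by linarith : (0:ℤ) ≤ b4.1)]
  · exfalso
    nlinarith [mul_le_mul_of_nonneg_left (show (1:ℤ) ≤ z1 from hx) (by linarith : (0:ℤ) ≤ b1.1),
      mul_le_mul_of_nonneg_left (show (1:ℤ) ≤ z2 from hy) (by linarith : (0:ℤ) ≤ b1.2)]
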